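/- arXiv:2602.06368 — 3 statements merged into one kernel-verified Lean document; each statement's English description precedes it below -/
import Mathlib

section
/- Let $x\in(0,1]$ and let $(g_n(x))$ and $(q_n(x))$ be its greedy and quasi-greedy $\beta$-expansion digit sequences. For any $\lambda$ with $|\lambda|>r_t$ such that $\phi_t(\lambda^{-1})=1$, one has the identity $\sum_{n=1}^\infty \frac{g_n(x)\,e^{t\sum_{i=1}^{n-1}g_i(x)}}{\lambda^n} = \sum_{n=1}^\infty \frac{q_n(x)\,e^{t\sum_{i=1}^{n-1}q_i(x)}}{\lambda^n}$. -/
open scoped BigOperators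
open Filter

/-- The beta-map `τ_β(x) = βx - ⌊βx⌋`. -/
noncomputable def tauβ (β x : ℝ) : ℝ := β * x - ⌊β * x⌋

/-- The greedy digits: `gdigit β x n = ⌊β τ_β^n(x)⌋` (0-indexed; `gdigit β x (n-1) = g_n(x)`). -/
noncomputable def gdigit (β x : ℝ) (n : ℕ) : ℤ := ⌊β * (tauβ β)^[n] x⌋

/-- `x` is simple if some iterate of the beta-map hits `1/β`. -/
def isSimple (β x : ℝ) : Prop := ∃ n : ℕ, (tauβ β)^[n] x = 1 / β

open Classical in
/-- The quasi-greedy expansion of `1` (0-indexed): if `1` is simple with minimal `m` such that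
`τ_β^[m] 1 = 1/β` (so `S(1) = m+1`), it is the periodic repetition of the word
`g_1(1) … g_{S-1}(1) (g_S(1) - 1)`; otherwise it is the greedy expansion of `1`. -/
noncomputable def qone (β : ℝ) : ℕ → ℤ :=
  if h : ∃ m : ℕ, (tauβ β)^[m] (1 : ℝ) = 1 / β then
    fun n =>
      if n % (Nat.find h + 1) = Nat.find h then gdigit β 1 (Nat.find h) - 1
      else gdigit β 1 (n % (Nat.find h + 1))
  else gdigit β 1

/-- Lexicographic order `a ⪯ b` on sequences. -/
def lexLe (a b : ℕ → ℤ) : Prop :=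
  a = b ∨ ∃ m : ℕ, (∀ i, i < m → a i = b i) ∧ a m < b m

/-- The left shift. -/
def shiftSeq (u : ℕ → ℤ) : ℕ → ℤ := fun n => u (n + 1)

/-- The beta-shift: the closure (in the product topology) of the set of greedy digit
sequences of non-simple points of `[0,1]`. -/
def Xbeta (β : ℝ) : Set (ℕ → ℤ) :=
  closure {u | ∃ x : ℝ, x ∈ Set.Icc (0:ℝ) 1 ∧ ¬ isSimple β x ∧ u = gdigit β x}

/-- `Hfun q t n = exp (t * (q 0 + ⋯ + q (n-1)))`. -/
noncomputable def Hfun (q : ℕ → ℤ) (t : ℝ) (n : ℕ) : ℝ :=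
  Real.exp (t * ∑ i ∈ Finset.range n, (q i : ℝ))

/-- The power series `φ_t(z) = ∑_{n ≥ 1} q_n H_{n-1}(t) z^n` (real variable). -/
noncomputable def phiR (q : ℕ → ℤ) (t z : ℝ) : ℝ :=
  ∑' n : ℕ, (q n : ℝ) * Hfun q t n * z ^ (n + 1)

/-- The power series `φ_t(z)` (complex variable). -/
noncomputable def phiC (q : ℕ → ℤ) (t : ℝ) (z : ℂ) : ℂ :=
  ∑' n : ℕ, ((q n : ℝ) : ℂ) * ((Hfun q t n : ℝ) : ℂ) * z ^ (n + 1)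

/-- `r_t = limsup_n ( sup_{x ∈ X_β} e^{t Σ_{i<n} x_i} )^{1/n}`. -/
noncomputable def rT (β t : ℝ) : ℝ :=
  Filter.atTop.limsup fun n : ℕ =>
    (⨆ u : Xbeta β, Real.exp (t * ∑ i ∈ Finset.range n, ((u : ℕ → ℤ) i : ℝ))) ^ ((1:ℝ) / n)

/-- The lexicographic interval `[0̲, a]` in `X_β`. -/
def Ival (β : ℝ) (a : ℕ → ℤ) : Set (ℕ → ℤ) := {u ∈ Xbeta β | lexLe u a}

/-- Prepend a digit to a sequence. -/
def consSeq (a : ℤ) (u : ℕ → ℤ) : ℕ → ℤ := fun n => if n = 0 then a else u (n - 1)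

open Classical in
/-- The transfer operator with potential `t·χ_{C_1}`:
`(𝓛_t f)(x) = Σ_{σ y = x, y ∈ X_β} e^{t χ_{C_1}(y)} f(y)`. -/
noncomputable def Lop (β t : ℝ) (f : (ℕ → ℤ) → ℝ) (u : ℕ → ℤ) : ℝ :=
  (if consSeq 0 u ∈ Xbeta β then f (consSeq 0 u) else 0)
    + Real.exp t * (if consSeq 1 u ∈ Xbeta β then f (consSeq 1 u) else 0)

open Classical in
/-- The transfer operator (acting on complex-valued functions). -/
noncomputable def LopC (β t : ℝ) (f : (ℕ → ℤ) → ℂ) (u : ℕ → ℤ) : ℂ :=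
  (if consSeq 0 u ∈ Xbeta β then f (consSeq 0 u) else 0)
    + Real.exp t * (if consSeq 1 u ∈ Xbeta β then f (consSeq 1 u) else 0)

open Classical in
/-- The quasi-greedy expansion of `x ∈ (0,1]` (0-indexed): if `x` is simple with minimal `m`
such that `τ_β^[m] x = 1/β` (so `S(x) = m+1`), then `q_i(x) = g_i(x)` for `i < S(x)`,
`q_{S(x)}(x) = 0` and `q_{S(x)+i}(x) = q_i(1)`; otherwise it is the greedy expansion. -/
noncomputable def qdig (β x : ℝ) : ℕ → ℤ :=
  if h : ∃ m : ℕ, (tauβ β)^[m] x = 1 / β then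
    fun n =>
      if n < Nat.find h then gdigit β x n
      else if n = Nat.find h then 0
      else qone β (n - Nat.find h - 1)
  else gdigit β x

section Aux

lemma tau_fix_zero (β : ℝ) : tauβ β 0 = 0 := by simp [tauβ]

lemma tau_iter_zero (β : ℝ) (k : ℕ) : (tauβ β)^[k] 0 = 0 :=
  Function.iterate_fixed (tau_fix_zero β) k

end Aux

/-- **Greedy vs quasi-greedy series identity.**  For `x ∈ (0,1]` and any `λ` with
`|λ| > r_t` and `φ_t(λ⁻¹) = 1`,
`∑_{n≥1} g_n(x) e^{t Σ_{i<n} g_i(x)} λ^{-n} = ∑_{n≥1} q_n(x) e^{t Σ_{i<n} q_i(x)} λ^{-n}`. -/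
theorem greedy_quasiGreedy_series_eq (β t : ℝ) (hβ1 : 1 < β) (hβ2 : β ≤ 2)
    (x : ℝ) (hx : x ∈ Set.Ioc (0 : ℝ) 1)
    (lam : ℂ) (hr : rT β t < ‖lam‖) (hroot : phiC (qone β) t lam⁻¹ = 1) :
    ∑' n : ℕ, ((gdigit β x n : ℝ) : ℂ) * ((Hfun (gdigit β x) t n : ℝ) : ℂ) / lam ^ (n + 1)
      = ∑' n : ℕ, ((qdig β x n : ℝ) : ℂ) * ((Hfun (qdig β x) t n : ℝ) : ℂ) / lam ^ (n + 1) := by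
  classical
  by_cases h : ∃ m : ℕ, (tauβ β)^[m] x = 1 / β
  case neg =>
    have : qdig β x = gdigit β x := by rw [qdig, dif_neg h]
    rw [this]
  case pos =>
  have hβ0 : (0:ℝ) < β := lt_trans one_pos hβ1
  have hβ0' : β ≠ 0 := ne_of_gt hβ0
  set m := Nat.find h with hm_def
  have hm : (tauβ β)^[m] x = 1/β := Nat.find_spec h
  have hlam : lam ≠ 0 := by
    intro h0
    rw [h0] at hroot
    simp [phiC] at hroot
  set F : ℕ → ℂ := fun n =>
    ((gdigit β x n : ℝ) : ℂ) * ((Hfun (gdigit β x) t n : ℝ) : ℂ) / lam ^ (n + 1) with hF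
  set G : ℕ → ℂ := fun n =>
    ((qdig β x n : ℝ) : ℂ) * ((Hfun (qdig β x) t n : ℝ) : ℂ) / lam ^ (n + 1) with hG
  have hq : qdig β x = fun n =>
      if n < m then gdigit β x n else if n = m then 0 else qone β (n - m - 1) := by
    rw [qdig, dif_pos h]
  -- digit facts
  have hg_m : gdigit β x m = 1 := by
    unfold gdigit
    rw [hm, mul_one_div, div_self hβ0']
    exact Int.floor_one
  have htail : ∀ k, (tauβ β)^[m + 1 + k] x = 0 := by
    intro k
    have h1 : (tauβ β)^[m+1] x = 0 := by
      rw [Function.iterate_succ_apply', hm]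
      unfold tauβ
      rw [mul_one_div, div_self hβ0']
      norm_num
    rw [show m+1+k = k + (m+1) by ring, Function.iterate_add_apply, h1]
    exact tau_iter_zero β k
  have hg0 : ∀ k, gdigit β x (m + 1 + k) = 0 := by
    intro k
    unfold gdigit
    rw [htail k]
    simp
  have hq_lt : ∀ i, i < m → qdig β x i = gdigit β x i := by
    intro i hi; rw [hq]; simp [hi]
  have hq_m : qdig β x m = 0 := by rw [hq]; simp
  have hq_tail : ∀ j, qdig β x (m + 1 + j) = qone β j := by
    intro j
    rw [hq]
    have h1 : ¬ (m + 1 + j < m) := by omega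
    have h2 : ¬ (m + 1 + j = m) := by omega
    have h3 : m + 1 + j - m - 1 = j := by omega
    simp [h1, h2, h3]
  have hH : ∀ n, n ≤ m → Hfun (qdig β x) t n = Hfun (gdigit β x) t n := by
    intro n hn
    unfold Hfun
    congr 2
    refine Finset.sum_congr rfl ?_
    intro i hi
    rw [Finset.mem_range] at hi
    rw [hq_lt i (lt_of_lt_of_le hi hn)]
  -- the constant c = F m
  set c : ℂ := ((Hfun (gdigit β x) t m : ℝ) : ℂ) * (lam⁻¹) ^ (m+1) with hc
  have hFm : F m = c := by
    rw [hF, hc]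
    simp only [hg_m]
    push_cast
    rw [div_eq_mul_inv, inv_pow]
    ring
  -- tail of G
  have hHtail : ∀ k, Hfun (qdig β x) t (m + 1 + k)
      = Hfun (gdigit β x) t m * Hfun (qone β) t k := by
    intro k
    unfold Hfun
    rw [← Real.exp_add, ← mul_add]
    congr 2
    rw [Finset.sum_range_add]
    have e1 : ∑ i ∈ Finset.range (m+1), (qdig β x i : ℝ)
        = ∑ i ∈ Finset.range m, (gdigit β x i : ℝ) := by
      rw [Finset.sum_range_succ, hq_m]
      simp only [Int.cast_zero, add_zero]
      refine Finset.sum_congr rfl ?_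
      intro i hi
      rw [Finset.mem_range] at hi
      rw [hq_lt i hi]
    have e2 : ∀ j ∈ Finset.range k, ((qdig β x (m + 1 + j) : ℝ)) = ((qone β j : ℝ)) := by
      intro j _
      rw [hq_tail j]
    rw [e1, Finset.sum_congr rfl e2]
  have hGtail : ∀ k, G (k + (m+1))
      = c * (((qone β k : ℝ) : ℂ) * ((Hfun (qone β) t k : ℝ) : ℂ) * (lam⁻¹) ^ (k+1)) := by
    intro k
    rw [hG]
    simp only
    have hk : k + (m+1) = m + 1 + k := by ring
    rw [hk, hq_tail k, hHtail k, hc]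
    push_cast
    rw [div_eq_mul_inv, show m + 1 + k + 1 = (m+1) + (k+1) by ring, pow_add, mul_inv, inv_pow,
      inv_pow]
    ring
  -- summability of the phi series
  have hsum_phi : Summable (fun k : ℕ =>
      ((qone β k : ℝ) : ℂ) * ((Hfun (qone β) t k : ℝ) : ℂ) * (lam⁻¹) ^ (k+1)) := by
    by_contra hns
    rw [phiC, tsum_eq_zero_of_not_summable hns] at hroot
    exact zero_ne_one hroot
  have hsum_tail : Summable (fun k : ℕ => G (k + (m+1))) := by
    have := hsum_phi.mul_left c
    exact this.congr (fun k => (hGtail k).symm)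
  have hsumG : Summable G := (summable_nat_add_iff (m+1)).1 hsum_tail
  -- LHS is a finite sum
  have hLHS : ∑' n, F n = ∑ n ∈ Finset.range (m+1), F n := by
    refine tsum_eq_sum ?_
    intro n hn
    rw [Finset.mem_range, not_lt] at hn
    have : gdigit β x n = 0 := by
      have hn' : n = m + 1 + (n - m - 1) := by omega
      rw [hn']; exact hg0 _
    rw [hF]
    simp [this]
  -- split RHS
  have hRHS : ∑' n, G n = (∑ n ∈ Finset.range (m+1), G n) + ∑' k, G (k + (m+1)) :=
    (hsumG.sum_add_tsum_nat_add (m+1)).symm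
  have htailsum : ∑' k, G (k + (m+1)) = c := by
    rw [tsum_congr hGtail, tsum_mul_left]
    rw [phiC] at hroot
    rw [hroot, mul_one]
  have hGn_eq_Fn : ∀ n, n < m → G n = F n := by
    intro n hn
    rw [hF, hG]
    simp only
    rw [hq_lt n hn, hH n (le_of_lt hn)]
  have hGm : G m = 0 := by
    rw [hG]; simp [hq_m]
  have hsum_eq : ∑ n ∈ Finset.range (m+1), G n = ∑ n ∈ Finset.range m, F n := by
    rw [Finset.sum_range_succ, hGm, add_zero]
    refine Finset.sum_congr rfl ?_
    intro n hn
    rw [Finset.mem_range] at hn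
    exact hGn_eq_Fn n hn
  rw [hLHS, hRHS, hsum_eq, htailsum, Finset.sum_range_succ, hFm]
end

section
/- Let $1<\beta\le2$ and write the quasi-greedy expansion of $1$ as $\underline{1}=1^N 0^M 1\cdots$ with maximal initial run of $N\ge2$ ones followed by $M\ge1$ zeros. Then $c_\beta:=\sup_{\mu\in M(X_\beta)}\mu(C_1)$ satisfies $\frac{N-1}{N}\le c_\beta\le\frac{N}{N+1}$, where $M(X_\beta)$ is the set of shift-invariant Borel probability measures on $X_\beta$. -/
open scoped BigOperators ENNReal
open Filter

open MeasureTheory in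
/-- `c_β = sup_{μ ∈ M(X_β)} μ(C_1)`, the supremum of the measure of the cylinder
`C_1 = {x_1 = 1}` over all shift-invariant Borel probability measures on `X_β`. -/
noncomputable def cbeta (β : ℝ) : ℝ :=
  sSup {r : ℝ | ∃ μ : Measure (ℕ → ℤ), IsProbabilityMeasure μ ∧
    μ (Xbeta β) = 1 ∧ μ.map shiftSeq = μ ∧ r = (μ {u | u 0 = 1}).toReal}

lemma tau_step_one {β y : ℝ} (h : ⌊β * y⌋ = 1) : tauβ β y = β * y - 1 := by
  simp [tauβ, h]

lemma tau_step_zero {β y : ℝ} (h : ⌊β * y⌋ = 0) : tauβ β y = β * y := by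
  simp [tauβ, h]

/-- run of zero digits starting at `a`. -/
lemma iter_zero_run {β : ℝ} (a k : ℕ)
    (h : ∀ i, i < k → gdigit β 1 (a + i) = 0) :
    (tauβ β)^[a + k] 1 = β ^ k * (tauβ β)^[a] 1 := by
  induction k with
  | zero => simp
  | succ k ih =>
    have h' : ∀ i, i < k → gdigit β 1 (a + i) = 0 := fun i hi => h i (Nat.lt_succ_of_lt hi)
    have hk := h k (Nat.lt_succ_self k)
    have : (tauβ β)^[a + (k+1)] 1 = tauβ β ((tauβ β)^[a + k] 1) := by
      rw [show a + (k+1) = (a+k) + 1 from rfl, Function.iterate_succ_apply']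
    rw [this, tau_step_zero hk, ih h']
    ring

/-- run of one digits from the start. -/
lemma iter_one_run {β x : ℝ} (n : ℕ)
    (h : ∀ i, i < n → gdigit β x i = 1) :
    (tauβ β)^[n] x = β ^ n * x - ∑ i ∈ Finset.range n, β ^ i := by
  induction n with
  | zero => simp
  | succ n ih =>
    have h' : ∀ i, i < n → gdigit β x i = 1 := fun i hi => h i (Nat.lt_succ_of_lt hi)
    have hn := h n (Nat.lt_succ_self n)
    rw [Function.iterate_succ_apply', tau_step_one hn, ih h', Finset.sum_range_succ',
      mul_sub, Finset.mul_sum]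
    simp only [← pow_succ']
    ring

lemma key_facts (β : ℝ) (hβ1 : 1 < β)
    (N M : ℕ) (hM : 1 ≤ M)
    (hones : ∀ i, i < N → qone β i = 1)
    (hzeros : ∀ i, N ≤ i → i < N + M → qone β i = 0)
    (hnext : qone β (N + M) = 1) :
    (∀ i, i < N → gdigit β 1 i = 1) ∧ (tauβ β)^[N] 1 ≤ 1 / β ∧ 0 < (tauβ β)^[N] 1 := by
  classical
  have hβ0 : (0:ℝ) < β := lt_trans one_pos hβ1
  have hNM : N < N + M := Nat.lt_add_of_pos_right hM
  -- generic facts about floors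
  have floor_one_ge : ∀ n : ℕ, gdigit β 1 n = 1 → 1/β ≤ (tauβ β)^[n] 1 := by
    intro n hn
    have hn' : ⌊β * (tauβ β)^[n] 1⌋ = 1 := hn
    have : (1:ℝ) ≤ β * (tauβ β)^[n] 1 := by
      have := Int.floor_le (β * (tauβ β)^[n] 1)
      rw [hn'] at this; exact_mod_cast this
    rw [div_le_iff₀ hβ0]; linarith [this]
  have floor_zero_lt : ∀ n : ℕ, gdigit β 1 n = 0 → (tauβ β)^[n] 1 < 1/β := by
    intro n hn
    have hn' : ⌊β * (tauβ β)^[n] 1⌋ = 0 := hn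
    have := Int.lt_floor_add_one (β * (tauβ β)^[n] 1)
    rw [hn'] at this
    rw [lt_div_iff₀ hβ0]
    push_cast at this; linarith
  by_cases h : ∃ m : ℕ, (tauβ β)^[m] (1:ℝ) = 1 / β
  · -- simple case
    set m := Nat.find h with hmdef
    have hm : (tauβ β)^[m] (1:ℝ) = 1/β := Nat.find_spec h
    have hq : ∀ n, qone β n = if n % (m + 1) = m then gdigit β 1 m - 1
        else gdigit β 1 (n % (m + 1)) := by
      intro n; rw [qone, dif_pos h]
    have hgm : gdigit β 1 m = 1 := by
      unfold gdigit
      rw [hm, mul_one_div, div_self (ne_of_gt hβ0)]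
      exact Int.floor_one
    have hNm : N ≤ m := by
      by_contra hc
      push_neg at hc
      have := hones m hc
      rw [hq m, if_pos (Nat.mod_eq_of_lt (Nat.lt_succ_self m)), hgm] at this
      omega
    have hdig : ∀ i, i < N → gdigit β 1 i = 1 := by
      intro i hi
      have hilt : i < m := lt_of_lt_of_le hi hNm
      have := hones i hi
      rw [hq i, if_neg (by rw [Nat.mod_eq_of_lt (Nat.lt_succ_of_lt hilt)]; omega),
        Nat.mod_eq_of_lt (Nat.lt_succ_of_lt hilt)] at this
      exact this
    refine ⟨hdig, ?_, ?_⟩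
    · -- τ^N 1 ≤ 1/β
      rcases eq_or_lt_of_le hNm with hNe | hNlt
      · rw [hNe, hm]
      · have h0 : gdigit β 1 N = 0 := by
          have := hzeros N le_rfl hNM
          rw [hq N, if_neg (by rw [Nat.mod_eq_of_lt (Nat.lt_succ_of_lt hNlt)]; omega),
            Nat.mod_eq_of_lt (Nat.lt_succ_of_lt hNlt)] at this
          exact this
        exact le_of_lt (floor_zero_lt N h0)
    · -- 0 < τ^N 1
      rcases eq_or_lt_of_le hNm with hNe | hNlt
      · rw [hNe, hm]; positivity
      · -- N < m : digits in [N, min m (N+M)) are zero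
        have hqd : ∀ i, N ≤ i → i < m → i < N + M → gdigit β 1 i = 0 := by
          intro i h1 h2 h3
          have := hzeros i h1 h3
          rw [hq i, if_neg (by rw [Nat.mod_eq_of_lt (Nat.lt_succ_of_lt h2)]; omega),
            Nat.mod_eq_of_lt (Nat.lt_succ_of_lt h2)] at this
          exact this
        by_cases hcase : m ≤ N + M
        · -- τ^m = β^(m-N) τ^N = 1/β > 0
          have hz : ∀ i, i < m - N → gdigit β 1 (N + i) = 0 := by
            intro i hi
            exact hqd (N+i) (Nat.le_add_right _ _) (by omega) (by omega)
          have := iter_zero_run (β := β) N (m - N) hz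
          rw [show N + (m - N) = m by omega, hm] at this
          have hpow : (0:ℝ) < β ^ (m - N) := pow_pos hβ0 _
          nlinarith [div_pos one_pos hβ0]
        · -- N + M < m
          push_neg at hcase
          have hz : ∀ i, i < M → gdigit β 1 (N + i) = 0 := by
            intro i hi
            exact hqd (N+i) (Nat.le_add_right _ _) (by omega) (by omega)
          have hrun := iter_zero_run (β := β) N M hz
          have h1 : gdigit β 1 (N + M) = 1 := by
            have := hnext
            rw [hq (N+M), if_neg (by rw [Nat.mod_eq_of_lt (Nat.lt_succ_of_lt hcase)]; omega),
              Nat.mod_eq_of_lt (Nat.lt_succ_of_lt hcase)] at this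
            exact this
          have := floor_one_ge (N+M) h1
          rw [hrun] at this
          have hpow : (0:ℝ) < β ^ M := pow_pos hβ0 _
          nlinarith [div_pos one_pos hβ0]
  · -- non-simple case : qone = gdigit β 1
    have hq : ∀ n, qone β n = gdigit β 1 n := by intro n; rw [qone, dif_neg h]
    have hdig : ∀ i, i < N → gdigit β 1 i = 1 := fun i hi => (hq i) ▸ hones i hi
    have h0 : gdigit β 1 N = 0 := (hq N) ▸ hzeros N le_rfl hNM
    refine ⟨hdig, le_of_lt (floor_zero_lt N h0), ?_⟩
    have hz : ∀ i, i < M → gdigit β 1 (N + i) = 0 := by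
      intro i hi
      exact (hq (N+i)) ▸ hzeros (N+i) (Nat.le_add_right _ _) (by omega)
    have hrun := iter_zero_run (β := β) N M hz
    have h1 : gdigit β 1 (N + M) = 1 := (hq (N+M)) ▸ hnext
    have := floor_one_ge (N+M) h1
    rw [hrun] at this
    have hpow : (0:ℝ) < β ^ M := pow_pos hβ0 _
    nlinarith [div_pos one_pos hβ0]

lemma tauN_eval {β : ℝ} {N : ℕ} (hdig : ∀ i, i < N → gdigit β 1 i = 1) :
    (β - 1) * (tauβ β)^[N] 1 = β ^ (N+1) - 2 * β ^ N + 1 := by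
  rw [iter_one_run N hdig]
  have hg : (∑ i ∈ Finset.range N, β ^ i) * (β - 1) = β ^ N - 1 := geom_sum_mul β N
  linear_combination (-1:ℝ) * hg

lemma P_pos {β : ℝ} {N : ℕ} (hβ1 : 1 < β) (hdig : ∀ i, i < N → gdigit β 1 i = 1)
    (hpos : 0 < (tauβ β)^[N] 1) : 0 < β ^ (N+1) - 2 * β ^ N + 1 := by
  rw [← tauN_eval hdig]
  exact mul_pos (by linarith) hpos

/-- no point of `[0,1]` which is non-simple has `N+1` leading one digits. -/
lemma no_ones_block {β : ℝ} {N : ℕ} (hβ1 : 1 < β)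
    (hdig : ∀ i, i < N → gdigit β 1 i = 1) (hle : (tauβ β)^[N] 1 ≤ 1 / β)
    {x : ℝ} (hx : x ∈ Set.Icc (0:ℝ) 1) (hns : ¬ isSimple β x) :
    ¬ (∀ i, i ≤ N → gdigit β x i = 1) := by
  intro hall
  have hβ0 : (0:ℝ) < β := lt_trans one_pos hβ1
  rcases lt_or_eq_of_le hx.2 with hx1 | hx1
  · -- x < 1 : strict comparison of orbits
    have hcmp : ∀ j, j ≤ N → (tauβ β)^[j] x < (tauβ β)^[j] 1 := by
      intro j hj
      induction j with
      | zero => simpa using hx1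
      | succ j ih =>
        have hj' : j ≤ N := Nat.le_of_succ_le hj
        have hlt := ih hj'
        have hdx : ⌊β * (tauβ β)^[j] x⌋ = 1 := hall j hj'
        have hd1 : ⌊β * (tauβ β)^[j] 1⌋ = 1 := hdig j (Nat.lt_of_succ_le hj)
        rw [Function.iterate_succ_apply', Function.iterate_succ_apply',
          tau_step_one hdx, tau_step_one hd1]
        nlinarith
    have h1 : 1/β ≤ (tauβ β)^[N] x := by
      have hn' : ⌊β * (tauβ β)^[N] x⌋ = 1 := hall N le_rfl
      have : ((1:ℤ):ℝ) ≤ β * (tauβ β)^[N] x := by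
        rw [← hn']; exact Int.floor_le _
      rw [div_le_iff₀ hβ0]; push_cast at this; linarith
    have := hcmp N le_rfl
    linarith
  · -- x = 1
    rcases lt_or_eq_of_le hle with hlt | heq
    · have hd : ⌊β * (tauβ β)^[N] x⌋ = 1 := hall N le_rfl
      rw [hx1] at hd
      have hnn : 0 ≤ (tauβ β)^[N] 1 := by
        cases N with
        | zero => norm_num
        | succ n =>
          rw [Function.iterate_succ_apply']
          exact Int.fract_nonneg (β * (tauβ β)^[n] 1)
      have h2 : β * (tauβ β)^[N] 1 < 1 := by
        have := (lt_div_iff₀ hβ0).1 hlt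
        linarith
      have : ⌊β * (tauβ β)^[N] 1⌋ = 0 := by
        apply Int.floor_eq_zero_iff.2
        constructor
        · positivity
        · exact h2
      omega
    · exact hns ⟨N, by rw [hx1, heq]⟩

lemma measurable_shiftSeq : Measurable shiftSeq :=
  measurable_pi_lambda _ (fun n => measurable_pi_apply (n + 1))

lemma Xbeta_no_block {β : ℝ} {N : ℕ} (hβ1 : 1 < β)
    (hdig : ∀ i, i < N → gdigit β 1 i = 1) (hle : (tauβ β)^[N] 1 ≤ 1 / β) :
    ∀ u ∈ Xbeta β, ∃ i, i ≤ N ∧ u i ≠ 1 := by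
  have hopen : IsOpen {u : ℕ → ℤ | ∀ i ≤ N, u i = 1} := by
    have : {u : ℕ → ℤ | ∀ i ≤ N, u i = 1} = ⋂ i ∈ Finset.range (N+1), {u | u i = 1} := by
      ext u
      simp only [Set.mem_setOf_eq, Set.mem_iInter, Finset.mem_range]
      constructor
      · intro h i hi; exact h i (Nat.lt_succ_iff.1 hi)
      · intro h i hi; exact h i (Nat.lt_succ_iff.2 hi)
    rw [this]
    apply isOpen_biInter_finset
    intro i _
    exact (continuous_apply i).isOpen_preimage {1} (isOpen_discrete _)
  intro u hu
  by_contra hc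
  push_neg at hc
  have hmemblock : u ∈ {u : ℕ → ℤ | ∀ i ≤ N, u i = 1} := by
    intro i hi
    by_contra h'
    exact h' (hc i hi)
  have hsub : {u | ∃ x : ℝ, x ∈ Set.Icc (0:ℝ) 1 ∧ ¬ isSimple β x ∧ u = gdigit β x}
      ⊆ {u : ℕ → ℤ | ∀ i ≤ N, u i = 1}ᶜ := by
    rintro v ⟨x, hx, hns, rfl⟩
    intro hvz
    exact no_ones_block hβ1 hdig hle hx hns (fun i hi => hvz i hi)
  have := closure_minimal hsub (isClosed_compl_iff.2 hopen) hu
  exact this hmemblock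

open MeasureTheory in
lemma measure_upper {β : ℝ} {N : ℕ} (hβ1 : 1 < β)
    (hdig : ∀ i, i < N → gdigit β 1 i = 1) (hle : (tauβ β)^[N] 1 ≤ 1 / β)
    (μ : Measure (ℕ → ℤ)) (hprob : IsProbabilityMeasure μ)
    (hXfull : μ (Xbeta β) = 1) (hinv : μ.map shiftSeq = μ) :
    (μ {u | u 0 = 1}).toReal ≤ (N : ℝ) / (N + 1) := by
  classical
  set X := Xbeta β with hXdef
  set A : ℕ → Set (ℕ → ℤ) := fun i => {u | u i = 1} with hAdef
  have hAmeas : ∀ i, MeasurableSet (A i) := by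
    intro i
    have : MeasurableSet ((fun u : ℕ → ℤ => u i) ⁻¹' {1}) :=
      (measurable_pi_apply i) (measurableSet_singleton (1:ℤ))
    exact this
  have hXmeas : MeasurableSet X := isClosed_closure.measurableSet
  -- shift invariance of μ (A i)
  have hshiftA : ∀ i, shiftSeq ⁻¹' (A i) = A (i+1) := by
    intro i; rfl
  have hAconst : ∀ i, μ (A i) = μ (A 0) := by
    intro i
    induction i with
    | zero => rfl
    | succ i ih =>
      rw [← hshiftA i, ← Measure.map_apply measurable_shiftSeq (hAmeas i), hinv, ih]
  -- complement of X is null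
  have hXc : μ Xᶜ = 0 := by
    have := measure_compl hXmeas (measure_ne_top μ X)
    rw [hXfull, measure_univ] at this
    simp [this]
  have hAX : ∀ i, μ (A i) = μ (A i ∩ X) := by
    intro i
    apply le_antisymm
    · calc μ (A i) ≤ μ ((A i ∩ X) ∪ Xᶜ) := measure_mono (by
          intro u hu
          by_cases h : u ∈ X
          · exact Or.inl ⟨hu, h⟩
          · exact Or.inr h)
      _ ≤ μ (A i ∩ X) + μ Xᶜ := measure_union_le _ _
      _ = μ (A i ∩ X) := by rw [hXc, add_zero]
    · exact measure_mono Set.inter_subset_left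
  -- pointwise sum bound and integration
  have hpt : ∀ u, (∑ i ∈ Finset.range (N+1), (A i ∩ X).indicator (1 : (ℕ → ℤ) → ℝ≥0∞) u)
      ≤ X.indicator (fun _ => (N : ℝ≥0∞)) u := by
    intro u
    by_cases hu : u ∈ X
    · rw [Set.indicator_of_mem hu]
      obtain ⟨i₀, hi₀, hne⟩ := Xbeta_no_block hβ1 hdig hle u hu
      have hi₀mem : i₀ ∈ Finset.range (N+1) := Finset.mem_range.2 (Nat.lt_succ_of_le hi₀)
      rw [← Finset.add_sum_erase _ _ hi₀mem]
      have h0 : (A i₀ ∩ X).indicator (1 : (ℕ → ℤ) → ℝ≥0∞) u = 0 := by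
        apply Set.indicator_of_notMem
        intro ⟨h1, _⟩
        exact hne h1
      rw [h0, zero_add]
      calc ∑ i ∈ (Finset.range (N+1)).erase i₀, (A i ∩ X).indicator (1 : (ℕ → ℤ) → ℝ≥0∞) u
          ≤ ∑ _i ∈ (Finset.range (N+1)).erase i₀, (1:ℝ≥0∞) := by
            apply Finset.sum_le_sum
            intro i _
            by_cases h : u ∈ A i ∩ X
            · simp [Set.indicator_of_mem h]
            · simp [Set.indicator_of_notMem h]
        _ = ((Finset.range (N+1)).erase i₀).card • (1:ℝ≥0∞) := (Finset.sum_const _)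
        _ = (N : ℝ≥0∞) := by
            rw [Finset.card_erase_of_mem hi₀mem, Finset.card_range]
            simp
    · rw [Set.indicator_of_notMem hu]
      have : ∀ i ∈ Finset.range (N+1), (A i ∩ X).indicator (1 : (ℕ → ℤ) → ℝ≥0∞) u = 0 := by
        intro i _
        apply Set.indicator_of_notMem
        intro ⟨_, h2⟩
        exact hu h2
      rw [Finset.sum_congr rfl this]
      simp
  have hsum : ((N:ℝ≥0∞) + 1) * μ (A 0) ≤ (N : ℝ≥0∞) := by
    have e1 : ((N:ℝ≥0∞) + 1) * μ (A 0) = ∑ i ∈ Finset.range (N+1), μ (A i ∩ X) := by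
      have hc : ∀ i ∈ Finset.range (N+1), μ (A i ∩ X) = μ (A 0) :=
        fun i _ => (hAX i).symm.trans (hAconst i)
      rw [Finset.sum_congr rfl hc, Finset.sum_const, Finset.card_range, nsmul_eq_mul]
      push_cast
      ring
    have e2 : ∀ i, μ (A i ∩ X) = ∫⁻ u, (A i ∩ X).indicator 1 u ∂μ := by
      intro i
      rw [lintegral_indicator_one ((hAmeas i).inter hXmeas)]
    rw [e1, Finset.sum_congr rfl (fun i _ => e2 i), ← lintegral_finset_sum]
    · calc ∫⁻ u, (∑ i ∈ Finset.range (N+1), (A i ∩ X).indicator 1 u) ∂μ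
          ≤ ∫⁻ u, X.indicator (fun _ => (N:ℝ≥0∞)) u ∂μ := lintegral_mono hpt
        _ = (N:ℝ≥0∞) * μ X := by
            rw [lintegral_indicator hXmeas, setLIntegral_const]
        _ = (N:ℝ≥0∞) := by rw [hXfull, mul_one]
    · intro i _
      exact measurable_one.indicator ((hAmeas i).inter hXmeas)
  -- convert to real
  have hfin : μ (A 0) ≠ ⊤ := measure_ne_top μ _
  have hreal : ((N:ℝ) + 1) * (μ (A 0)).toReal ≤ (N : ℝ) := by
    have := ENNReal.toReal_mono (by simp) hsum
    rw [ENNReal.toReal_mul] at this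
    rwa [ENNReal.toReal_add (by simp) (by simp), ENNReal.toReal_natCast, ENNReal.toReal_one] at this
  have hN1 : (0:ℝ) < (N:ℝ) + 1 := by positivity
  rw [le_div_iff₀ hN1]
  show (μ (A 0)).toReal * ((N:ℝ)+1) ≤ (N:ℝ)
  linarith

noncomputable def xval (β : ℝ) (N : ℕ) (j : ℕ) : ℝ := 1/(β-1) - β^j/(β^N-1)
def wseq (N : ℕ) : ℕ → ℤ := fun n => if n % N = N - 1 then 0 else 1
def vseq (N : ℕ) (j : ℕ) : ℕ → ℤ := fun n => wseq N (j + n)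

section lower
variable {β : ℝ} {N : ℕ}

lemma xval_pos (hβ1 : 1 < β) (hN : 2 ≤ N) (j : ℕ) (hj : j < N) : 0 < xval β N j := by
  have hb1 : (0:ℝ) < β - 1 := by linarith
  have hbN : (0:ℝ) < β ^ N - 1 := by
    have := one_lt_pow₀ hβ1 (by omega : N ≠ 0); linarith
  unfold xval
  rw [div_sub_div _ _ (ne_of_gt hb1) (ne_of_gt hbN), div_pos_iff]
  left
  constructor
  · have h1 : β ^ j ≤ β ^ (N-1) := pow_le_pow_right₀ (le_of_lt hβ1) (by omega)
    have h2 : β ^ (N-1) * β = β ^ N := by rw [← pow_succ]; congr 1; omega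
    have h3 : (1:ℝ) < β ^ (N-1) := one_lt_pow₀ hβ1 (by omega)
    nlinarith
  · positivity

lemma xval_lt_one (hβ1 : 1 < β) (hN : 2 ≤ N)
    (hP : 0 < β ^ (N+1) - 2 * β ^ N + 1) (j : ℕ) : xval β N j < 1 := by
  have hb1 : (0:ℝ) < β - 1 := by linarith
  have hbN : (0:ℝ) < β ^ N - 1 := by
    have := one_lt_pow₀ hβ1 (by omega : N ≠ 0); linarith
  unfold xval
  rw [div_sub_div _ _ (ne_of_gt hb1) (ne_of_gt hbN), div_lt_one (by positivity)]
  have h1 : (1:ℝ) ≤ β ^ j := one_le_pow₀ (le_of_lt hβ1)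
  have h2 : β ^ N * β = β ^ (N+1) := (pow_succ β N).symm
  nlinarith

lemma xval_step (hβ1 : 1 < β) (hN : 2 ≤ N) (j : ℕ) :
    β * xval β N j - 1 = xval β N (j+1) := by
  have hb1 : (β:ℝ) - 1 ≠ 0 := by intro h; nlinarith
  have hbN : (β:ℝ) ^ N - 1 ≠ 0 := by
    have := one_lt_pow₀ hβ1 (by omega : N ≠ 0); intro h; nlinarith
  unfold xval
  field_simp
  ring

lemma xval_wrap (hβ1 : 1 < β) (hN : 2 ≤ N) :
    β * xval β N (N-1) = xval β N 0 := by
  have hb1 : (β:ℝ) - 1 ≠ 0 := by intro h; nlinarith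
  have hbN0 : (1:ℝ) < β ^ N := one_lt_pow₀ hβ1 (by omega : N ≠ 0)
  have hbN : (β:ℝ) ^ N - 1 ≠ 0 := by intro h; nlinarith
  have hpow : β ^ (N-1) * β = β ^ N := by rw [← pow_succ]; congr 1; omega
  unfold xval
  field_simp
  nlinarith [hpow]
end lower

section lower2
variable {β : ℝ} {N : ℕ}

lemma xval_floor (hβ1 : 1 < β) (hN : 2 ≤ N) (hP : 0 < β ^ (N+1) - 2 * β ^ N + 1)
    (j : ℕ) (hj : j < N) :
    ⌊β * xval β N j⌋ = if j = N - 1 then 0 else 1 := by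
  by_cases hje : j = N - 1
  · rw [if_pos hje, hje, xval_wrap hβ1 hN]
    exact Int.floor_eq_zero_iff.2 ⟨le_of_lt (xval_pos hβ1 hN 0 (by omega)),
      xval_lt_one hβ1 hN hP 0⟩
  · rw [if_neg hje]
    have hstep := xval_step hβ1 hN j
    have h1 : β * xval β N j = xval β N (j+1) + 1 := by linarith
    rw [h1]
    have h2 : ⌊xval β N (j+1)⌋ = 0 := Int.floor_eq_zero_iff.2
      ⟨le_of_lt (xval_pos hβ1 hN (j+1) (by omega)), xval_lt_one hβ1 hN hP (j+1)⟩
    rw [show xval β N (j+1) + 1 = xval β N (j+1) + (1:ℤ) by push_cast; ring,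
      Int.floor_add_intCast, h2]
    norm_num

lemma xval_tau (hβ1 : 1 < β) (hN : 2 ≤ N) (hP : 0 < β ^ (N+1) - 2 * β ^ N + 1)
    (j : ℕ) (hj : j < N) :
    tauβ β (xval β N j) = xval β N ((j+1) % N) := by
  unfold tauβ
  rw [xval_floor hβ1 hN hP j hj]
  by_cases hje : j = N - 1
  · rw [if_pos hje]
    have : (j + 1) % N = 0 := by
      rw [hje, show N-1+1 = N by omega]
      exact Nat.mod_self N
    rw [this]
    push_cast
    rw [sub_zero, hje, xval_wrap hβ1 hN]
  · rw [if_neg hje]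
    have : (j + 1) % N = j + 1 := Nat.mod_eq_of_lt (by omega)
    rw [this]
    push_cast
    rw [← xval_step hβ1 hN j]

lemma xval_iter (hβ1 : 1 < β) (hN : 2 ≤ N) (hP : 0 < β ^ (N+1) - 2 * β ^ N + 1)
    (j : ℕ) (hj : j < N) (n : ℕ) :
    (tauβ β)^[n] (xval β N j) = xval β N ((j + n) % N) := by
  induction n with
  | zero => simp [Nat.mod_eq_of_lt hj]
  | succ n ih =>
    rw [Function.iterate_succ_apply', ih,
      xval_tau hβ1 hN hP _ (Nat.mod_lt _ (by omega))]
    have he : (j + (n+1)) % N = ((j + n) % N + 1) % N := by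
      conv_lhs => rw [show j + (n+1) = (j + n) + 1 from rfl, Nat.add_mod (j+n) 1 N]
      rw [Nat.mod_eq_of_lt (show 1 < N by omega)]
    rw [he]

lemma xval_gdigit (hβ1 : 1 < β) (hN : 2 ≤ N) (hP : 0 < β ^ (N+1) - 2 * β ^ N + 1)
    (j : ℕ) (hj : j < N) :
    gdigit β (xval β N j) = vseq N j := by
  funext n
  unfold gdigit vseq wseq
  rw [xval_iter hβ1 hN hP j hj n, xval_floor hβ1 hN hP _ (Nat.mod_lt _ (by omega))]

lemma xval_not_simple (hβ1 : 1 < β) (hN : 2 ≤ N) (hP : 0 < β ^ (N+1) - 2 * β ^ N + 1)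
    (j : ℕ) (hj : j < N) : ¬ isSimple β (xval β N j) := by
  rintro ⟨n, hn⟩
  rw [xval_iter hβ1 hN hP j hj n] at hn
  set k := (j + n) % N with hk
  have hkN : k < N := Nat.mod_lt _ (by omega)
  have htau := xval_tau hβ1 hN hP k hkN
  rw [hn] at htau
  have hβ0 : (0:ℝ) < β := by linarith
  have h1 : β * (1/β) = 1 := by field_simp
  unfold tauβ at htau
  rw [h1] at htau
  norm_num at htau
  have hne : xval β N ((k+1) % N) ≠ 0 := ne_of_gt (xval_pos hβ1 hN _ (Nat.mod_lt _ (by omega)))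
  first
  | exact hne htau.symm
  | exact hne htau

lemma vseq_mem_Xbeta (hβ1 : 1 < β) (hN : 2 ≤ N) (hP : 0 < β ^ (N+1) - 2 * β ^ N + 1)
    (j : ℕ) (hj : j < N) : vseq N j ∈ Xbeta β := by
  apply subset_closure
  exact ⟨xval β N j, ⟨le_of_lt (xval_pos hβ1 hN j hj), le_of_lt (xval_lt_one hβ1 hN hP j)⟩,
    xval_not_simple hβ1 hN hP j hj, (xval_gdigit hβ1 hN hP j hj).symm⟩

lemma vseq_shift (j : ℕ) : shiftSeq (vseq N j) = vseq N (j+1) := by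
  funext n
  unfold shiftSeq vseq
  congr 1
  omega

lemma vseq_period (hN : 2 ≤ N) : vseq N N = vseq N 0 := by
  funext n
  unfold vseq wseq
  have : (N + n) % N = (0 + n) % N := by
    rw [Nat.add_mod_left]
    simp
  rw [this]
end lower2

open MeasureTheory in
lemma measure_lower {β : ℝ} {N : ℕ} (hβ1 : 1 < β) (hN : 2 ≤ N)
    (hdig : ∀ i, i < N → gdigit β 1 i = 1) (hpos : 0 < (tauβ β)^[N] 1) :
    ∃ μ : Measure (ℕ → ℤ), IsProbabilityMeasure μ ∧ μ (Xbeta β) = 1 ∧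
      μ.map shiftSeq = μ ∧ ((N:ℝ) - 1) / N = (μ {u | u 0 = 1}).toReal := by
  classical
  have hP : 0 < β ^ (N+1) - 2 * β ^ N + 1 := P_pos hβ1 hdig hpos
  set μ : Measure (ℕ → ℤ) :=
    ((N : ℝ≥0∞))⁻¹ • ∑ j ∈ Finset.range N, Measure.dirac (vseq N j) with hμdef
  have hNne : ((N:ℝ≥0∞)) ≠ 0 := by
    simp only [ne_eq, Nat.cast_eq_zero]; omega
  have hNnetop : ((N:ℝ≥0∞)) ≠ ⊤ := ENNReal.natCast_ne_top N
  have happ : ∀ s : Set (ℕ → ℤ), MeasurableSet s →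
      μ s = (N:ℝ≥0∞)⁻¹ * ∑ j ∈ Finset.range N, s.indicator 1 (vseq N j) := by
    intro s hs
    rw [hμdef, Measure.smul_apply, Measure.finset_sum_apply, smul_eq_mul]
    congr 1
    exact Finset.sum_congr rfl fun j _ => Measure.dirac_apply' _ hs
  have hprob : IsProbabilityMeasure μ := by
    constructor
    rw [happ Set.univ MeasurableSet.univ]
    have : ∀ j ∈ Finset.range N, (Set.univ : Set (ℕ → ℤ)).indicator
        (1 : (ℕ → ℤ) → ℝ≥0∞) (vseq N j) = 1 := by
      intro j _
      simp
    rw [Finset.sum_congr rfl this, Finset.sum_const, Finset.card_range, nsmul_eq_mul, mul_one]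
    exact ENNReal.inv_mul_cancel hNne hNnetop
  have hXmeas : MeasurableSet (Xbeta β) := isClosed_closure.measurableSet
  have hXfull : μ (Xbeta β) = 1 := by
    rw [happ _ hXmeas]
    have : ∀ j ∈ Finset.range N, (Xbeta β).indicator
        (1 : (ℕ → ℤ) → ℝ≥0∞) (vseq N j) = 1 := by
      intro j hj
      rw [Set.indicator_of_mem (vseq_mem_Xbeta hβ1 hN hP j (Finset.mem_range.1 hj))]
      rfl
    rw [Finset.sum_congr rfl this, Finset.sum_const, Finset.card_range, nsmul_eq_mul, mul_one]
    exact ENNReal.inv_mul_cancel hNne hNnetop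
  have hinv : μ.map shiftSeq = μ := by
    apply Measure.ext
    intro s hs
    rw [Measure.map_apply measurable_shiftSeq hs, happ _ (measurable_shiftSeq hs), happ _ hs]
    congr 1
    have h1 : ∀ j ∈ Finset.range N, (shiftSeq ⁻¹' s).indicator (1 : (ℕ → ℤ) → ℝ≥0∞) (vseq N j)
        = s.indicator 1 (vseq N (j+1)) := by
      intro j _
      rw [← vseq_shift]
      rfl
    rw [Finset.sum_congr rfl h1]
    -- reindexing: ∑_{j<N} g (j+1) = ∑_{j<N} g j  using g N = g 0
    set g : ℕ → ℝ≥0∞ := fun j => s.indicator 1 (vseq N j) with hg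
    have hper : g N = g 0 := by rw [hg]; simp [vseq_period hN]
    have hfin : g 0 ≠ ⊤ := by
      rw [hg]
      by_cases h : vseq N 0 ∈ s
      · simp [Set.indicator_of_mem h]
      · simp [Set.indicator_of_notMem h]
    have e1 : (∑ j ∈ Finset.range N, g (j+1)) + g 0 = ∑ j ∈ Finset.range (N+1), g j :=
      (Finset.sum_range_succ' g N).symm
    have e2 : ∑ j ∈ Finset.range (N+1), g j = (∑ j ∈ Finset.range N, g j) + g N :=
      Finset.sum_range_succ g N
    have e3 : (∑ j ∈ Finset.range N, g (j+1)) + g 0 = (∑ j ∈ Finset.range N, g j) + g 0 := by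
      rw [e1, e2, hper]
    have := (ENNReal.add_left_inj hfin).1 e3
    exact this
  have hcount : μ {u : ℕ → ℤ | u 0 = 1} = (N:ℝ≥0∞)⁻¹ * ((N - 1 : ℕ) : ℝ≥0∞) := by
    have hsmeas : MeasurableSet {u : ℕ → ℤ | u 0 = 1} := by
      have : MeasurableSet ((fun u : ℕ → ℤ => u 0) ⁻¹' {1}) :=
        (measurable_pi_apply 0) (measurableSet_singleton (1:ℤ))
      exact this
    rw [happ _ hsmeas]
    congr 1
    have hval : ∀ j ∈ Finset.range N, ({u : ℕ → ℤ | u 0 = 1}).indicator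
        (1 : (ℕ → ℤ) → ℝ≥0∞) (vseq N j) = if j = N - 1 then 0 else 1 := by
      intro j hj
      have hjN := Finset.mem_range.1 hj
      have hv0 : vseq N j 0 = wseq N j := by unfold vseq; rw [Nat.add_zero]
      by_cases h : j = N - 1
      · rw [if_pos h]
        apply Set.indicator_of_notMem
        intro hmem
        have : vseq N j 0 = 1 := hmem
        rw [hv0] at this
        unfold wseq at this
        rw [Nat.mod_eq_of_lt hjN, if_pos h] at this
        exact absurd this (by norm_num)
      · rw [if_neg h]
        have : vseq N j 0 = 1 := by
          rw [hv0]; unfold wseq; rw [Nat.mod_eq_of_lt hjN, if_neg h]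
        rw [Set.indicator_of_mem (show vseq N j ∈ {u : ℕ → ℤ | u 0 = 1} from this)]
        rfl
    rw [Finset.sum_congr rfl hval]
    have hmem : N - 1 ∈ Finset.range N := Finset.mem_range.2 (by omega)
    rw [← Finset.add_sum_erase _ _ hmem, if_pos rfl, zero_add]
    have : ∀ j ∈ (Finset.range N).erase (N-1), (if j = N - 1 then (0:ℝ≥0∞) else 1) = 1 := by
      intro j hj
      rw [if_neg (Finset.ne_of_mem_erase hj)]
    rw [Finset.sum_congr rfl this, Finset.sum_const, Finset.card_erase_of_mem hmem,
      Finset.card_range, nsmul_eq_mul, mul_one]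
  refine ⟨μ, hprob, hXfull, hinv, ?_⟩
  rw [hcount, ENNReal.toReal_mul, ENNReal.toReal_inv, ENNReal.toReal_natCast,
    ENNReal.toReal_natCast, Nat.cast_sub (by omega : 1 ≤ N), Nat.cast_one]
  rw [div_eq_inv_mul]


/-- **Bounds on the maximal frequency, case `N ≥ 2`.**  If the quasi-greedy expansion of `1`
begins `1^N 0^M 1⋯` (maximal initial block of `N ≥ 2` ones followed by `M ≥ 1` zeros and a
one), then `(N-1)/N ≤ c_β ≤ N/(N+1)`. -/
theorem cbeta_bounds_of_initial_block (β : ℝ) (hβ1 : 1 < β) (hβ2 : β ≤ 2)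
    (N M : ℕ) (hN : 2 ≤ N) (hM : 1 ≤ M)
    (hones : ∀ i, i < N → qone β i = 1)
    (hzeros : ∀ i, N ≤ i → i < N + M → qone β i = 0)
    (hnext : qone β (N + M) = 1) :
    ((N : ℝ) - 1) / N ≤ cbeta β ∧ cbeta β ≤ (N : ℝ) / (N + 1) := by
  classical
  obtain ⟨hdig, hle, hpos⟩ := key_facts β hβ1 N M hM hones hzeros hnext
  have hub : ∀ r ∈ {r : ℝ | ∃ μ : MeasureTheory.Measure (ℕ → ℤ),
      MeasureTheory.IsProbabilityMeasure μ ∧ μ (Xbeta β) = 1 ∧ μ.map shiftSeq = μ ∧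
      r = (μ {u | u 0 = 1}).toReal}, r ≤ (N:ℝ)/((N:ℝ)+1) := by
    rintro r ⟨μ, hp, hX, hi, rfl⟩
    exact measure_upper hβ1 hdig hle μ hp hX hi
  constructor
  · obtain ⟨μ, hp, hX, hi, heq⟩ := measure_lower hβ1 hN hdig hpos
    exact le_csSup ⟨(N:ℝ)/((N:ℝ)+1), hub⟩ ⟨μ, hp, hX, hi, heq⟩
  · exact Real.sSup_le hub (by positivity)
end

section
/- Let $M\ge1$ and let $\beta>1$ satisfy $\beta^{M+1}=\beta^M+1$. Then the quasi-greedy expansion of $1$ in base $\beta$ is $(1\,0^M)^\infty$ and $c_\beta=\frac{1}{M+1}$. -/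
open scoped BigOperators
open Filter

open scoped ENNReal

section Aux
variable {M : ℕ} {β : ℝ}

lemma tau_fract (x : ℝ) : tauβ β x = Int.fract (β * x) := rfl

lemma tau_nonneg (x : ℝ) : 0 ≤ tauβ β x := Int.fract_nonneg _
lemma tau_lt_one (x : ℝ) : tauβ β x < 1 := Int.fract_lt_one _

lemma tau_of_lt_one {x : ℝ} (h0 : 0 ≤ β * x) (h1 : β * x < 1) : tauβ β x = β * x := by
  rw [tau_fract, Int.fract_eq_self]; exact ⟨h0, h1⟩

lemma tau_of_ge {x : ℝ} (h1 : 1 ≤ β * x) (h2 : β * x < 2) : tauβ β x = β * x - 1 := by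
  have : ⌊β * x⌋ = 1 := by
    rw [Int.floor_eq_iff]
    push_cast; constructor <;> linarith
  rw [tauβ, this]; norm_num

-- iterate membership
lemma tauIter_mem {x : ℝ} (hx : x ∈ Set.Icc (0:ℝ) 1) (n : ℕ) :
    0 ≤ (tauβ β)^[n] x ∧ (tauβ β)^[n] x ≤ 1 := by
  cases n with
  | zero => simpa using hx
  | succ n =>
      rw [Function.iterate_succ_apply']
      exact ⟨tau_nonneg _, (tau_lt_one _).le⟩

lemma gdigit_shift (x : ℝ) (a n : ℕ) :
    gdigit β x (a + n) = gdigit β ((tauβ β)^[a] x) n := by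
  unfold gdigit
  rw [Nat.add_comm, Function.iterate_add_apply]

section Parry
variable (hM : 1 ≤ M) (hβ : 1 < β) (heq : β ^ (M + 1) = β ^ M + 1)
include hβ heq

set_option linter.unusedSectionVars false in
lemma key : β ^ M * (β - 1) = 1 := by
  have : β ^ (M+1) = β ^ M * β := by ring
  nlinarith [this]

include hM in
lemma beta_lt_two : β < 2 := by
  have hk := key hβ heq
  have h1 : (1:ℝ) < β ^ M := one_lt_pow₀ hβ (by omega)
  nlinarith [mul_pos (sub_pos.2 h1) (sub_pos.2 hβ)]

lemma inv_beta_eq : 1 / β = 1 - (β ^ (M+1))⁻¹ := by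
  have hk := key hβ heq
  have h0 : (0:ℝ) < β := by linarith
  have h1 : (0:ℝ) < β ^ (M+1) := pow_pos h0 _
  field_simp
  nlinarith [pow_pos h0 M]


variable {x : ℝ}

lemma blockIter (hx1 : 1 ≤ β * x) (hx2 : x < 1) :
    ∀ j, j ≤ M → (tauβ β)^[j+1] x = β ^ j * (β * x - 1) := by
  have hβ0 : (0:ℝ) < β := by linarith
  have hk := key hβ heq
  have hub : ∀ j, j ≤ M → β ^ j * (β * x - 1) < 1 := by
    intro j hj
    have h1 : β ^ j ≤ β ^ M := pow_le_pow_right₀ hβ.le hj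
    have h2 : β * x - 1 < β - 1 := by nlinarith
    have h3 : 0 ≤ β * x - 1 := by linarith
    calc β ^ j * (β * x - 1) ≤ β ^ M * (β * x - 1) := by nlinarith [pow_pos hβ0 j]
    _ < β ^ M * (β - 1) := by nlinarith [pow_pos hβ0 M]
    _ = 1 := hk
  intro j hj
  induction j with
  | zero =>
      simp only [Function.iterate_one, pow_zero, one_mul]
      exact tau_of_ge (by linarith) (by nlinarith [hub 0 (Nat.zero_le M), hβ0])
  | succ j ih =>
      have hj' : j ≤ M := by omega
      rw [Function.iterate_succ_apply', ih hj']
      have h3 : 0 ≤ β * x - 1 := by linarith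
      have : β * (β ^ j * (β * x - 1)) = β ^ (j+1) * (β * x - 1) := by ring
      rw [tau_of_lt_one (mul_nonneg hβ0.le (mul_nonneg (pow_pos hβ0 j).le h3)) (by rw [this]; exact hub _ hj), this]

include hM in
lemma blockDigit0 (hx1 : 1 ≤ β * x) (hx2 : x < 1) : gdigit β x 0 = 1 := by
  have hβ2 : β < 2 := beta_lt_two hM hβ heq
  unfold gdigit
  simp only [Function.iterate_zero, id_eq]
  rw [Int.floor_eq_iff]
  push_cast; constructor <;> nlinarith

lemma blockDigits (hx1 : 1 ≤ β * x) (hx2 : x < 1) :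
    ∀ j, 1 ≤ j → j ≤ M → gdigit β x j = 0 := by
  have hβ0 : (0:ℝ) < β := by linarith
  have hk := key hβ heq
  intro j h1 h2
  obtain ⟨i, rfl⟩ : ∃ i, j = i + 1 := ⟨j - 1, by omega⟩
  unfold gdigit
  rw [blockIter hβ heq hx1 hx2 i (by omega)]
  have h3 : 0 ≤ β * x - 1 := by linarith
  have heq2 : β * (β ^ i * (β * x - 1)) = β ^ (i+1) * (β * x - 1) := by ring
  rw [Int.floor_eq_zero_iff.2]
  rw [heq2, Set.mem_Ico]
  constructor
  · positivity
  · have h1 : β ^ (i+1) ≤ β ^ M := pow_le_pow_right₀ hβ.le (by omega)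
    have h2' : β * x - 1 < β - 1 := by nlinarith
    calc β ^ (i+1) * (β * x - 1) ≤ β ^ M * (β * x - 1) := by nlinarith [pow_pos hβ0 (i+1)]
    _ < β ^ M * (β - 1) := by nlinarith [pow_pos hβ0 M]
    _ = 1 := hk

lemma blockSmall (hx1 : 1 ≤ β * x) (hx2 : x < 1) :
    ∀ j, 1 ≤ j → j ≤ M → (tauβ β)^[j] x < 1 / β := by
  have hβ0 : (0:ℝ) < β := by linarith
  have hk := key hβ heq
  intro j h1 h2
  obtain ⟨i, rfl⟩ : ∃ i, j = i + 1 := ⟨j - 1, by omega⟩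
  rw [blockIter hβ heq hx1 hx2 i (by omega)]
  have h3 : 0 ≤ β * x - 1 := by linarith
  have h2' : β * x - 1 < β - 1 := by nlinarith
  have h4 : β ^ (i+1) ≤ β ^ M := pow_le_pow_right₀ hβ.le (by omega)
  rw [lt_div_iff₀ hβ0]
  have h5 : β ^ i * (β * x - 1) * β = β ^ (i+1) * (β * x - 1) := by ring
  rw [h5]
  calc β ^ (i+1) * (β * x - 1) ≤ β ^ M * (β * x - 1) := by nlinarith [pow_pos hβ0 (i+1)]
  _ < β ^ M * (β - 1) := by nlinarith [pow_pos hβ0 M]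
  _ = 1 := hk

lemma blockEnd (hx1 : 1 ≤ β * x) (hx2 : x < 1) :
    (tauβ β)^[M+1] x = 1 - β ^ (M+1) * (1 - x) := by
  rw [blockIter hβ heq hx1 hx2 M le_rfl]
  have hk := key hβ heq
  have : β ^ (M+1) = β ^ M * β := by ring
  nlinarith [this]


include hM in
lemma chainL {y : ℝ} (hy1 : 0 < y) (hy2 : y < 1) : ∀ N : ℕ,
    (tauβ β)^[N*(M+1)] (1 - (β^(N*(M+1)))⁻¹ * (1-y)) = y ∧
    (∀ m, m < N*(M+1) → gdigit β (1 - (β^(N*(M+1)))⁻¹ * (1-y)) m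
        = (if m % (M+1) = 0 then 1 else 0)) ∧
    (∀ m, m < N*(M+1) → (tauβ β)^[m] (1 - (β^(N*(M+1)))⁻¹ * (1-y)) ≠ 1/β) := by
  have hβ0 : (0:ℝ) < β := by linarith
  intro N
  induction N with
  | zero => refine ⟨by norm_num, by omega, by omega⟩
  | succ N ih =>
      set x : ℝ := 1 - (β^((N+1)*(M+1)))⁻¹ * (1-y) with hxdef
      have hpow : β ^ ((N+1)*(M+1)) = β ^ (N*(M+1)) * β ^ (M+1) := by
        rw [← pow_add]; ring_nf
      have hA0 : 0 < (β^((N+1)*(M+1)))⁻¹ * (1-y) := mul_pos (inv_pos.2 (pow_pos hβ0 _)) (by linarith)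
      have hAlt : (β^((N+1)*(M+1)))⁻¹ * (1-y) < (β^(M+1))⁻¹ := by
        have h1 : β ^ (M+1) ≤ β ^ ((N+1)*(M+1)) :=
          pow_le_pow_right₀ hβ.le (by nlinarith [Nat.one_le_iff_ne_zero.2 (by omega : N+1 ≠ 0)])
        have h2 : (β^((N+1)*(M+1)))⁻¹ ≤ (β^(M+1))⁻¹ :=
          inv_anti₀ (by positivity) h1
        calc (β^((N+1)*(M+1)))⁻¹ * (1-y) < (β^((N+1)*(M+1)))⁻¹ * 1 := by
              have := inv_pos.2 (pow_pos hβ0 ((N+1)*(M+1))); nlinarith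
        _ ≤ (β^(M+1))⁻¹ := by rw [mul_one]; exact h2
      have hxgt : 1/β < x := by
        rw [inv_beta_eq hβ heq, hxdef]; linarith
      have hxlt : x < 1 := by rw [hxdef]; linarith
      have hx1 : 1 ≤ β * x := by
        have h := (div_lt_iff₀ hβ0).1 hxgt
        nlinarith
      have hend : (tauβ β)^[M+1] x = 1 - (β^(N*(M+1)))⁻¹ * (1-y) := by
        rw [blockEnd hβ heq hx1 hxlt, hxdef]
        have hne : β ^ (N*(M+1)) ≠ 0 := by positivity
        have hne2 : β ^ ((N+1)*(M+1)) ≠ 0 := by positivity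
        field_simp
        rw [hpow]; ring
      obtain ⟨ih1, ih2, ih3⟩ := ih
      have hsplit : ∀ m : ℕ, (M+1) + m = m + (M+1) := by omega
      refine ⟨?_, ?_, ?_⟩
      · have : (N+1)*(M+1) = N*(M+1) + (M+1) := by ring
        rw [this, Function.iterate_add_apply, hend, ih1]
      · intro m hm
        by_cases hsmall : m < M + 1
        · rcases Nat.eq_zero_or_pos m with rfl | hmpos
          · simp only [Nat.zero_mod, if_pos rfl]
            exact blockDigit0 hM hβ heq hx1 hxlt
          · rw [blockDigits hβ heq hx1 hxlt m (by omega) (by omega),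
              Nat.mod_eq_of_lt hsmall, if_neg (by omega)]
        · obtain ⟨m', rfl⟩ : ∃ m', m = (M+1) + m' := ⟨m - (M+1), by omega⟩
          rw [gdigit_shift, hend, ih2 m' (by nlinarith), Nat.add_mod_left]
      · intro m hm
        by_cases hsmall : m < M + 1
        · rcases Nat.eq_zero_or_pos m with rfl | hmpos
          · simpa using (ne_of_lt hxgt).symm
          · exact ne_of_lt (blockSmall hβ heq hx1 hxlt m (by omega) (by omega))
        · obtain ⟨m', rfl⟩ : ∃ m', m = (M+1) + m' := ⟨m - (M+1), by omega⟩
          rw [hsplit, Function.iterate_add_apply, hend]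
          exact ih3 m' (by nlinarith)


include hM in
lemma oneIter : ∀ i, i + 1 ≤ M → (tauβ β)^[i+1] 1 = β ^ i * (β - 1) := by
  have hβ0 : (0:ℝ) < β := by linarith
  have hβ2 : β < 2 := beta_lt_two hM hβ heq
  have hk := key hβ heq
  intro i hi
  induction i with
  | zero =>
      have h0 : (tauβ β)^[0+1] (1:ℝ) = tauβ β 1 := by simp
      rw [h0, pow_zero, one_mul, tauβ]
      have h1 : ⌊β * (1:ℝ)⌋ = 1 := by
        rw [Int.floor_eq_iff]; push_cast; constructor <;> nlinarith
      rw [h1]; push_cast; ring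
  | succ i ih =>
      rw [Function.iterate_succ_apply', ih (by omega)]
      have hlt : β ^ (i+1) < β ^ M := pow_lt_pow_right₀ hβ (by omega)
      have hb : β * (β ^ i * (β - 1)) = β ^ (i+1) * (β - 1) := by ring
      rw [tau_of_lt_one (by rw [hb]; have := pow_pos hβ0 (i+1); nlinarith) (by rw [hb]; nlinarith), hb]

include hM in
lemma oneM : (tauβ β)^[M] 1 = 1 / β := by
  have hβ0 : (0:ℝ) < β := by linarith
  have hk := key hβ heq
  obtain ⟨i, rfl⟩ : ∃ i, M = i + 1 := ⟨M - 1, by omega⟩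
  rw [oneIter hM hβ heq i le_rfl]
  rw [eq_div_iff (by positivity)]
  calc β ^ i * (β - 1) * β = β ^ (i+1) * (β - 1) := by ring
  _ = 1 := hk

include hM in
lemma oneNe : ∀ j, j < M → (tauβ β)^[j] 1 ≠ 1 / β := by
  have hβ0 : (0:ℝ) < β := by linarith
  have hk := key hβ heq
  intro j hj
  rcases Nat.eq_zero_or_pos j with rfl | hjpos
  · have : 1 / β < 1 := by rw [div_lt_one hβ0]; exact hβ
    simpa using ne_of_gt this
  · obtain ⟨i, rfl⟩ : ∃ i, j = i + 1 := ⟨j - 1, by omega⟩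
    rw [oneIter hM hβ heq i (by omega)]
    intro hc
    rw [eq_div_iff (by positivity)] at hc
    have h2 : β ^ (i+1) * (β - 1) = 1 := by rw [pow_succ]; linear_combination hc
    have hlt : β ^ (i+1) < β ^ M := pow_lt_pow_right₀ hβ (by omega)
    nlinarith [mul_pos (sub_pos.2 hlt) (sub_pos.2 hβ)]

include hM in
lemma genP {x : ℝ} (hx : x ∈ Set.Icc (0:ℝ) 1) (hns : ¬ isSimple β x) :
    ∀ k j, 1 ≤ j → j ≤ M → gdigit β x k = 1 → gdigit β x (k+j) = 0 := by
  have hβ0 : (0:ℝ) < β := by linarith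
  have hβ2 : β < 2 := beta_lt_two hM hβ heq
  intro k j hj1 hj2 hd
  obtain ⟨hz0, hz1⟩ := tauIter_mem hx k
  have hzfloor : (1:ℤ) ≤ ⌊β * (tauβ β)^[k] x⌋ := by rw [← hd]; rfl
  have hbz : 1 ≤ β * (tauβ β)^[k] x := by
    have h := Int.le_floor.1 hzfloor
    push_cast at h; linarith [Int.floor_le (β * (tauβ β)^[k] x)]
  rcases lt_or_eq_of_le hz1 with hzlt | hzeq
  · rw [gdigit_shift]
    exact blockDigits hβ heq hbz hzlt j hj1 hj2
  · exact absurd ⟨k + M, by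
      rw [Nat.add_comm, Function.iterate_add_apply, hzeq, oneM hM hβ heq]⟩ hns

omit heq in
lemma simple_ctble : {y : ℝ | isSimple β y}.Countable := by
  have hβ0 : (0:ℝ) < β := by linarith
  have h1 : ∀ c : ℝ, {y : ℝ | tauβ β y = c}.Countable := by
    intro c
    refine Set.Countable.mono ?_
      (Set.countable_iUnion fun kk : ℤ => Set.countable_singleton ((c + (kk:ℝ)) / β))
    intro y hy
    simp only [Set.mem_iUnion, Set.mem_singleton_iff]
    refine ⟨⌊β * y⌋, ?_⟩
    have : β * y - ⌊β * y⌋ = c := hy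
    field_simp
    rw [mul_comm y β]
    linarith
  have h2 : ∀ s : Set ℝ, s.Countable → (tauβ β ⁻¹' s).Countable := by
    intro s hs
    have : tauβ β ⁻¹' s = ⋃ c ∈ s, {y : ℝ | tauβ β y = c} := by
      ext y; simp [Set.mem_preimage]
    rw [this]
    exact Set.Countable.biUnion hs fun c _ => h1 c
  have h3 : ∀ n : ℕ, ((tauβ β)^[n] ⁻¹' {1/β}).Countable := by
    intro n
    induction n with
    | zero => simpa using Set.countable_singleton (1/β : ℝ)
    | succ n ih =>
        have : (tauβ β)^[n+1] ⁻¹' {1/β} = tauβ β ⁻¹' ((tauβ β)^[n] ⁻¹' {1/β}) := by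
          rw [Function.iterate_succ]
          rfl
        rw [this]
        exact h2 _ ih
  have : {y : ℝ | isSimple β y} = ⋃ n : ℕ, (tauβ β)^[n] ⁻¹' {1/β} := by
    ext y; simp [isSimple]
  rw [this]
  exact Set.countable_iUnion h3

omit heq in
lemma exists_nonsimple : ∃ y : ℝ, 0 < y ∧ y < 1 ∧ ¬ isSimple β y := by
  by_contra h
  push_neg at h
  have hsub : Set.Ioo (0:ℝ) 1 ⊆ {y : ℝ | isSimple β y} := fun y hy => h y hy.1 hy.2
  have h0 := (simple_ctble hβ).measure_zero (μ := MeasureTheory.volume)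
  have h1 := MeasureTheory.measure_mono (μ := MeasureTheory.volume) hsub
  rw [h0, Real.volume_Ioo] at h1
  simp at h1

omit hβ heq in
lemma zeroPrefix : ∀ j : ℕ, ∀ x : ℝ, 1 < β → 0 ≤ x → x < 1 →
    (tauβ β)^[j] (x / β^j) = x ∧ (∀ i, i < j → gdigit β (x / β^j) i = 0) ∧
      (∀ i, i < j → (tauβ β)^[i] (x / β^j) ≠ 1/β) := by
  intro j
  induction j with
  | zero => intro x hβ h0 h1; refine ⟨by simp, by omega, by omega⟩
  | succ j ih =>
      intro x hβ h0 h1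
      have hβ0 : (0:ℝ) < β := by linarith
      obtain ⟨ih1, ih2, ih3⟩ := ih (x / β) hβ (by positivity)
        ((div_lt_one hβ0).2 (by linarith))
      have hxe : x / β ^ (j+1) = (x / β) / β ^ j := by
        rw [div_div, pow_succ]; ring_nf
      have htau : tauβ β (x / β) = x := by
        rw [tau_of_lt_one (by positivity) (by rw [mul_div_cancel₀ _ (ne_of_gt hβ0)]; exact h1),
          mul_div_cancel₀ _ (ne_of_gt hβ0)]
      refine ⟨?_, ?_, ?_⟩
      · rw [hxe, Function.iterate_succ_apply', ih1, htau]
      · intro i hi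
        rcases Nat.lt_or_ge i j with hij | hij
        · rw [hxe]; exact ih2 i hij
        · have : i = j := by omega
          subst this
          unfold gdigit
          rw [hxe, ih1, mul_div_cancel₀ _ (ne_of_gt hβ0)]
          exact Int.floor_eq_zero_iff.2 ⟨h0, h1⟩
      · intro i hi
        rcases Nat.lt_or_ge i j with hij | hij
        · rw [hxe]; exact ih3 i hij
        · have : i = j := by omega
          subst this
          rw [hxe, ih1]
          intro hc
          have hβne : β ≠ 0 := ne_of_gt hβ0
          field_simp [hβne] at hc
          linarith

end Parry

def Pset (M : ℕ) : Set (ℕ → ℤ) := {u | ∀ k j, 1 ≤ j → j ≤ M → u k = 1 → u (k+j) = 0}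

lemma isClosed_Pset : IsClosed (Pset M) := by
  have hrw : Pset M = ⋂ (k : ℕ), ⋂ (j : ℕ), ⋂ (_ : 1 ≤ j ∧ j ≤ M),
      ({u : ℕ → ℤ | u k = 1}ᶜ ∪ {u : ℕ → ℤ | u (k+j) = 0}) := by
    ext u
    simp only [Pset, Set.mem_setOf_eq, Set.mem_iInter, Set.mem_union, Set.mem_compl_iff]
    constructor
    · intro h k j ⟨h1, h2⟩
      by_cases hk : u k = 1
      · exact Or.inr (h k j h1 h2 hk)
      · exact Or.inl hk
    · intro h k j h1 h2 hk
      rcases h k j ⟨h1, h2⟩ with h' | h'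
      · exact absurd hk h'
      · exact h'
  rw [hrw]
  refine isClosed_iInter fun k => isClosed_iInter fun j => isClosed_iInter fun _ => ?_
  refine IsClosed.union ?_ ?_
  · have h1 : IsOpen {u : ℕ → ℤ | u k = 1} := by
      have hh : {u : ℕ → ℤ | u k = 1} = (fun u : ℕ → ℤ => u k) ⁻¹' {(1:ℤ)} := rfl
      rw [hh]; exact (isOpen_discrete _).preimage (continuous_apply k)
    exact h1.isClosed_compl
  · have hh : {u : ℕ → ℤ | u (k+j) = 0} = (fun u : ℕ → ℤ => u (k+j)) ⁻¹' {(0:ℤ)} := rfl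
    rw [hh]; exact isClosed_singleton.preimage (continuous_apply (k+j))

section Parry2
variable {M : ℕ} {β : ℝ} (hM : 1 ≤ M) (hβ : 1 < β) (heq : β ^ (M + 1) = β ^ M + 1)
include hM hβ heq

lemma Xbeta_subset_P : Xbeta β ⊆ Pset M := by
  apply closure_minimal ?_ isClosed_Pset
  rintro u ⟨x, hx, hns, rfl⟩
  intro k j h1 h2 hk
  exact genP hM hβ heq hx hns k j h1 h2 hk

lemma v_mem_Xbeta (k : ℕ) (hk : k ≤ M) :
    (fun n => if (n + k) % (M+1) = 0 then (1:ℤ) else 0) ∈ Xbeta β := by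
  have hβ0 : (0:ℝ) < β := by linarith
  obtain ⟨y, hy1, hy2, hyns⟩ := exists_nonsimple hβ
  set j : ℕ := if k = 0 then 0 else M + 1 - k with hj
  have hjM : j ≤ M := by rw [hj]; split <;> omega
  have hjk : (j + k) % (M + 1) = 0 := by
    rw [hj]; by_cases hk0 : k = 0
    · simp [hk0]
    · rw [if_neg hk0, show M + 1 - k + k = M + 1 by omega, Nat.mod_self]
  have hsmall : ∀ i, i < j → (i + k) % (M + 1) ≠ 0 := by
    intro i hij
    rw [hj] at hij
    by_cases hk0 : k = 0
    · rw [hk0] at hij; simp at hij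
    · rw [if_neg hk0] at hij
      rw [Nat.mod_eq_of_lt (by omega)]; omega
  have hperiod : ∀ m : ℕ, (j + m + k) % (M + 1) = m % (M + 1) := by
    intro m
    rw [hj]; by_cases hk0 : k = 0
    · simp [hk0]
    · rw [if_neg hk0, show M + 1 - k + m + k = m + (M+1) from by omega]
      exact Nat.add_mod_right m (M+1)
  set xN : ℕ → ℝ := fun N => 1 - (β^(N*(M+1)))⁻¹ * (1-y) with hxN
  have hxval : ∀ N, xN N = 1 - (β^(N*(M+1)))⁻¹ * (1-y) := fun _ => rfl
  have hx_mem : ∀ N, 0 ≤ xN N ∧ xN N < 1 := by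
    intro N
    have h1 : (β^(N*(M+1)))⁻¹ ≤ 1 := by
      rw [inv_le_one_iff₀]; right; exact one_le_pow₀ hβ.le
    have h2 : 0 < (β^(N*(M+1)))⁻¹ := inv_pos.2 (pow_pos hβ0 _)
    rw [hxval]
    constructor
    · nlinarith
    · nlinarith
  have hchain := chainL hM hβ heq hy1 hy2
  set w : ℕ → ℝ := fun N => xN N / β ^ j with hw
  have hwval : ∀ N, w N = xN N / β ^ j := fun _ => rfl
  have hzp : ∀ N, (tauβ β)^[j] (w N) = xN N ∧ (∀ i, i < j → gdigit β (w N) i = 0) ∧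
      (∀ i, i < j → (tauβ β)^[i] (w N) ≠ 1/β) := by
    intro N
    rw [hwval]
    exact zeroPrefix j (xN N) hβ (hx_mem N).1 (hx_mem N).2
  have hw_mem : ∀ N, w N ∈ Set.Icc (0:ℝ) 1 := by
    intro N
    have h2 : (0:ℝ) < β ^ j := pow_pos hβ0 _
    have h3 : β ^ j ≥ 1 := one_le_pow₀ hβ.le
    obtain ⟨hx0, hx1⟩ := hx_mem N
    rw [hwval]
    constructor
    · exact div_nonneg hx0 h2.le
    · rw [div_le_one h2]; nlinarith
  have hw_ns : ∀ N, ¬ isSimple β (w N) := by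
    intro N ⟨n, hn⟩
    rcases Nat.lt_or_ge n j with hnj | hnj
    · exact (hzp N).2.2 n hnj hn
    · obtain ⟨m, rfl⟩ : ∃ m, n = m + j := ⟨n - j, by omega⟩
      rw [Function.iterate_add_apply, (hzp N).1] at hn
      rcases Nat.lt_or_ge m (N*(M+1)) with hm | hm
      · rw [hxval] at hn
        exact (hchain N).2.2 m hm hn
      · obtain ⟨p, rfl⟩ : ∃ p, m = p + N*(M+1) := ⟨m - N*(M+1), by omega⟩
        rw [hxval, Function.iterate_add_apply, (hchain N).1] at hn
        exact hyns ⟨p, hn⟩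
  have hdig : ∀ N, ∀ i, i < j + N*(M+1) →
      gdigit β (w N) i = (if (i + k) % (M+1) = 0 then (1:ℤ) else 0) := by
    intro N i hi
    rcases Nat.lt_or_ge i j with hij | hij
    · rw [(hzp N).2.1 i hij, if_neg (hsmall i hij)]
    · obtain ⟨m, rfl⟩ : ∃ m, i = j + m := ⟨i - j, by omega⟩
      rw [gdigit_shift, (hzp N).1, hxval, (hchain N).2.1 m (by omega),
        show (j + m + k) % (M+1) = m % (M+1) from hperiod m]
  unfold Xbeta
  refine mem_closure_of_tendsto (f := fun N => gdigit β (w N)) (b := atTop) ?_ ?_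
  · rw [tendsto_pi_nhds]
    intro i
    apply Filter.Tendsto.congr' (f₁ := fun _ => if (i + k) % (M+1) = 0 then (1:ℤ) else 0)
    · filter_upwards [Filter.eventually_ge_atTop (i+1)] with N hN
      refine (hdig N i ?_).symm
      have := Nat.le_mul_of_pos_right N (show 0 < M+1 by omega)
      omega
    · exact tendsto_const_nhds
  · filter_upwards with N
    exact ⟨w N, hw_mem N, hw_ns N, rfl⟩


open MeasureTheory

omit hM hβ heq in
lemma shift_iterate (u : ℕ → ℤ) (k n : ℕ) : (shiftSeq^[k] u) n = u (n + k) := by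
  induction k generalizing u with
  | zero => rfl
  | succ k ih =>
      rw [Function.iterate_succ_apply, ih (shiftSeq u)]
      rfl

omit hM hβ heq in
lemma shift_measurable : Measurable (shiftSeq) :=
  measurable_pi_lambda _ (fun n => measurable_pi_apply (n+1))

omit hM hβ heq in
lemma coord_measurable (k : ℕ) (c : ℤ) : MeasurableSet {u : ℕ → ℤ | u k = c} := by
  have : {u : ℕ → ℤ | u k = c} = (fun u : ℕ → ℤ => u k) ⁻¹' {c} := rfl
  rw [this]
  exact measurable_pi_apply k (measurableSet_singleton c)

omit hM hβ heq in
lemma Xbeta_measurable : MeasurableSet (Xbeta β) :=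
  (isClosed_closure : IsClosed (Xbeta β)).measurableSet

lemma cb_upper {μ : Measure (ℕ → ℤ)} (hprob : IsProbabilityMeasure μ)
    (hX : μ (Xbeta β) = 1) (hinv : μ.map shiftSeq = μ) :
    μ {u : ℕ → ℤ | u 0 = 1} ≤ ((M : ℝ≥0∞) + 1)⁻¹ := by
  have hiter : ∀ (k : ℕ) (s : Set (ℕ → ℤ)), MeasurableSet s →
      μ ((shiftSeq^[k]) ⁻¹' s) = μ s := by
    intro k
    induction k with
    | zero => intro s _; rfl
    | succ k ih =>
        intro s hs
        rw [Function.iterate_succ]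
        have h1 : (shiftSeq^[k] ∘ shiftSeq) ⁻¹' s = shiftSeq ⁻¹' ((shiftSeq^[k]) ⁻¹' s) := rfl
        rw [h1]
        have h2 : MeasurableSet ((shiftSeq^[k]) ⁻¹' s) := shift_measurable.iterate k hs
        rw [← Measure.map_apply shift_measurable h2, hinv]
        exact ih s hs
  have hBk : ∀ k : ℕ, μ {u : ℕ → ℤ | u k = 1} = μ {u : ℕ → ℤ | u 0 = 1} := by
    intro k
    have h1 : {u : ℕ → ℤ | u k = 1} = (shiftSeq^[k]) ⁻¹' {u : ℕ → ℤ | u 0 = 1} := by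
      ext u
      simp only [Set.mem_preimage, Set.mem_setOf_eq, shift_iterate, Nat.zero_add]
    rw [h1, hiter k _ (coord_measurable 0 1)]
  have hcompl : μ (Xbeta β)ᶜ = 0 := by
    rw [measure_compl Xbeta_measurable (measure_ne_top μ _), hX, measure_univ, tsub_self]
  have hBX : ∀ k : ℕ, μ ({u : ℕ → ℤ | u k = 1} ∩ Xbeta β) = μ {u : ℕ → ℤ | u k = 1} := by
    intro k
    refine le_antisymm (measure_mono Set.inter_subset_left) ?_
    have h1 := measure_inter_add_diff (μ := μ) {u : ℕ → ℤ | u k = 1} (Xbeta_measurable (β := β))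
    have h2 : μ ({u : ℕ → ℤ | u k = 1} \ Xbeta β) = 0 :=
      le_antisymm (le_trans (measure_mono (Set.diff_subset_compl _ _)) hcompl.le) zero_le
    rw [← h1, h2, add_zero]
  have hdisj : (↑(Finset.range (M+1)) : Set ℕ).PairwiseDisjoint
      (fun k => {u : ℕ → ℤ | u k = 1} ∩ Xbeta β) := by
    intro a ha b hb hab
    simp only [Finset.coe_range, Set.mem_Iio] at ha hb
    rw [Function.onFun, Set.disjoint_left]
    rintro u ⟨hua, huX⟩ ⟨hub, _⟩
    simp only [Set.mem_setOf_eq] at hua hub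
    have hP := Xbeta_subset_P hM hβ heq huX
    rcases Nat.lt_or_ge a b with h | h
    · have h0 := hP a (b - a) (by omega) (by omega) hua
      rw [show a + (b - a) = b from by omega] at h0
      omega
    · have h0 := hP b (a - b) (by omega) (by omega) hub
      rw [show b + (a - b) = a from by omega] at h0
      omega
  have hmeas : ∀ b ∈ Finset.range (M+1),
      MeasurableSet ({u : ℕ → ℤ | u b = 1} ∩ Xbeta β) :=
    fun b _ => (coord_measurable b 1).inter Xbeta_measurable
  have hsum := measure_biUnion_finset (μ := μ) hdisj hmeas
  have hle : ∑ k ∈ Finset.range (M+1), μ ({u : ℕ → ℤ | u k = 1} ∩ Xbeta β) ≤ 1 := by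
    rw [← hsum]
    exact prob_le_one
  have hfin : ∑ k ∈ Finset.range (M+1), μ ({u : ℕ → ℤ | u k = 1} ∩ Xbeta β)
      = (M+1 : ℕ) * μ {u : ℕ → ℤ | u 0 = 1} := by
    rw [Finset.sum_congr rfl (fun k _ => by rw [hBX k, hBk k])]
    rw [Finset.sum_const, Finset.card_range, nsmul_eq_mul]
  rw [hfin] at hle
  rw [ENNReal.le_inv_iff_mul_le]
  calc μ {u : ℕ → ℤ | u 0 = 1} * ((M:ℝ≥0∞) + 1)
      = (M+1 : ℕ) * μ {u : ℕ → ℤ | u 0 = 1} := by push_cast; ring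
  _ ≤ 1 := hle


omit hM hβ heq in
lemma measure_map_finsum {ι : Type*} (s : Finset ι) (μs : ι → Measure (ℕ → ℤ))
    {f : (ℕ → ℤ) → (ℕ → ℤ)} (hf : Measurable f) :
    Measure.map f (∑ k ∈ s, μs k) = ∑ k ∈ s, Measure.map f (μs k) := by
  classical
  induction s using Finset.induction with
  | empty => simp
  | insert _ _ hnot ih =>
      rw [Finset.sum_insert hnot, Finset.sum_insert hnot, Measure.map_add _ _ hf, ih]

lemma cb_mem : ∃ μ : Measure (ℕ → ℤ), IsProbabilityMeasure μ ∧
    μ (Xbeta β) = 1 ∧ μ.map shiftSeq = μ ∧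
    (1:ℝ) / ((M:ℝ) + 1) = (μ {u : ℕ → ℤ | u 0 = 1}).toReal := by
  classical
  set v : ℕ → (ℕ → ℤ) := fun k n => if (n + k) % (M+1) = 0 then 1 else 0 with hv
  have hvval : ∀ k n, v k n = if (n + k) % (M+1) = 0 then 1 else 0 := fun _ _ => rfl
  have hvmem : ∀ k, k ≤ M → v k ∈ Xbeta β := fun k hk => v_mem_Xbeta hM hβ heq k hk
  have hMne : ((M:ℝ≥0∞) + 1) ≠ 0 := by simp
  have hMnetop : ((M:ℝ≥0∞) + 1) ≠ ⊤ := by simp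
  set μ : Measure (ℕ → ℤ) :=
    ((M:ℝ≥0∞) + 1)⁻¹ • ∑ k ∈ Finset.range (M+1), Measure.dirac (v k) with hμ
  have hcast : ((M+1 : ℕ) : ℝ≥0∞) = (M:ℝ≥0∞) + 1 := by push_cast; ring
  have happly : ∀ (s : Set (ℕ → ℤ)),
      μ s = ((M:ℝ≥0∞) + 1)⁻¹ * ∑ k ∈ Finset.range (M+1), Measure.dirac (v k) s := by
    intro s
    rw [hμ, Measure.smul_apply, Measure.finset_sum_apply, smul_eq_mul]
  have huniv : μ Set.univ = 1 := by
    rw [happly]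
    have : ∀ k ∈ Finset.range (M+1), Measure.dirac (v k) (Set.univ : Set (ℕ → ℤ)) = 1 :=
      fun k _ => by simp
    rw [Finset.sum_congr rfl this, Finset.sum_const, Finset.card_range, nsmul_eq_mul, mul_one,
      hcast, ENNReal.inv_mul_cancel hMne hMnetop]
  have hprob : IsProbabilityMeasure μ := ⟨huniv⟩
  have hXmeas := Xbeta_measurable (β := β)
  have hXb : μ (Xbeta β) = 1 := by
    rw [happly]
    have : ∀ k ∈ Finset.range (M+1), Measure.dirac (v k) (Xbeta β) = 1 := by
      intro k hk
      rw [Measure.dirac_apply' _ hXmeas,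
        Set.indicator_of_mem (hvmem k (by simp at hk; omega))]
      rfl
    rw [Finset.sum_congr rfl this, Finset.sum_const, Finset.card_range, nsmul_eq_mul, mul_one,
      hcast, ENNReal.inv_mul_cancel hMne hMnetop]
  have hvshift : ∀ k, shiftSeq (v k) = v (k+1) := by
    intro k; funext n
    show v k (n+1) = v (k+1) n
    rw [hvval, hvval, show n+1+k = n+(k+1) from by omega]
  have hvper : v (M+1) = v 0 := by
    funext n
    simp [hvval, Nat.add_mod_right]
  have hmap : μ.map shiftSeq = μ := by
    rw [hμ, Measure.map_smul, measure_map_finsum _ _ shift_measurable]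
    congr 1
    have h1 : ∀ k ∈ Finset.range (M+1),
        Measure.map shiftSeq (Measure.dirac (v k)) = Measure.dirac (v (k+1)) := by
      intro k _
      rw [Measure.map_dirac' shift_measurable, hvshift]
    rw [Finset.sum_congr rfl h1]
    refine Finset.sum_nbij' (fun k => (k+1) % (M+1)) (fun k => (k+M) % (M+1)) ?_ ?_ ?_ ?_ ?_
    · intro a ha; simp only [Finset.mem_range] at *; exact Nat.mod_lt _ (by omega)
    · intro a ha; simp only [Finset.mem_range] at *; exact Nat.mod_lt _ (by omega)
    · intro a ha; simp only [Finset.mem_range] at ha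
      show ((a+1) % (M+1) + M) % (M+1) = a
      rcases Nat.lt_or_ge (a+1) (M+1) with h | h
      · rw [Nat.mod_eq_of_lt h, show a + 1 + M = a + (M+1) from by omega, Nat.add_mod_right,
          Nat.mod_eq_of_lt (by omega)]
      · have ha1 : a = M := by omega
        subst ha1
        rw [Nat.mod_self, Nat.zero_add, Nat.mod_eq_of_lt (by omega)]
    · intro a ha; simp only [Finset.mem_range] at ha
      show ((a+M) % (M+1) + 1) % (M+1) = a
      rcases Nat.eq_zero_or_pos a with rfl | hpos
      · rw [Nat.zero_add, Nat.mod_eq_of_lt (show M < M + 1 by omega), Nat.mod_self]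
      · rw [show a + M = (a-1) + (M+1) from by omega, Nat.add_mod_right,
          Nat.mod_eq_of_lt (show a - 1 < M + 1 by omega), show a - 1 + 1 = a from by omega,
          Nat.mod_eq_of_lt (show a < M + 1 by omega)]
    · intro a ha; simp only [Finset.mem_range] at ha
      show Measure.dirac (v (a+1)) = Measure.dirac (v ((a+1) % (M+1)))
      rcases Nat.lt_or_ge (a+1) (M+1) with h | h
      · rw [Nat.mod_eq_of_lt h]
      · have ha1 : a = M := by omega
        subst ha1
        rw [Nat.mod_self, hvper]
  have hC1 : μ {u : ℕ → ℤ | u 0 = 1} = ((M:ℝ≥0∞) + 1)⁻¹ := by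
    rw [happly]
    have h1 : ∀ k ∈ Finset.range (M+1),
        Measure.dirac (v k) {u : ℕ → ℤ | u 0 = 1} = if k = 0 then 1 else 0 := by
      intro k hk
      simp only [Finset.mem_range] at hk
      rw [Measure.dirac_apply' _ (coord_measurable 0 1)]
      by_cases hk0 : k = 0
      · subst hk0
        rw [if_pos rfl, Set.indicator_of_mem]
        · rfl
        · show v 0 0 = 1
          rw [hvval]; simp
      · rw [if_neg hk0, Set.indicator_of_notMem]
        show ¬ v k 0 = 1
        rw [hvval, Nat.zero_add, Nat.mod_eq_of_lt hk, if_neg hk0]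
        norm_num
    rw [Finset.sum_congr rfl h1, Finset.sum_ite_eq' (Finset.range (M+1)) 0 (fun _ => (1:ℝ≥0∞))]
    simp
  refine ⟨μ, hprob, hXb, hmap, ?_⟩
  rw [hC1, ENNReal.toReal_inv, ← hcast, ENNReal.toReal_natCast]
  push_cast
  rw [one_div]


lemma qone_eval : ∀ n : ℕ, qone β n = if n % (M + 1) = 0 then 1 else 0 := by
  classical
  have hβ0 : (0:ℝ) < β := by linarith
  have hβ2 : β < 2 := beta_lt_two hM hβ heq
  have hk := key hβ heq
  have hone : ∃ m : ℕ, (tauβ β)^[m] (1:ℝ) = 1 / β := ⟨M, oneM hM hβ heq⟩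
  have hfind : Nat.find hone = M := by
    rw [Nat.find_eq_iff]
    exact ⟨oneM hM hβ heq, fun j hj => oneNe hM hβ heq j hj⟩
  have hg0 : gdigit β 1 0 = 1 := by
    unfold gdigit
    simp only [Function.iterate_zero, id_eq, mul_one]
    rw [Int.floor_eq_iff]; push_cast; constructor <;> linarith
  have hgM : gdigit β 1 M = 1 := by
    unfold gdigit
    rw [oneM hM hβ heq, mul_one_div, div_self (ne_of_gt hβ0)]
    norm_num
  have hgj : ∀ j, 1 ≤ j → j < M → gdigit β 1 j = 0 := by
    intro j h1 h2
    obtain ⟨i, rfl⟩ : ∃ i, j = i + 1 := ⟨j - 1, by omega⟩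
    unfold gdigit
    rw [oneIter hM hβ heq i (by omega)]
    have hb : β * (β ^ i * (β - 1)) = β ^ (i+1) * (β - 1) := by ring
    rw [hb, Int.floor_eq_zero_iff]
    have hlt : β ^ (i+1) < β ^ M := pow_lt_pow_right₀ hβ (by omega)
    constructor
    · nlinarith [pow_pos hβ0 (i+1)]
    · nlinarith
  intro n
  unfold qone
  rw [dif_pos hone]
  simp only [hfind]
  have hr : n % (M+1) < M + 1 := Nat.mod_lt _ (by omega)
  by_cases h1 : n % (M+1) = M
  · rw [if_pos h1, if_neg (by omega), hgM]
    norm_num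
  · rw [if_neg h1]
    by_cases h2 : n % (M+1) = 0
    · rw [if_pos h2, h2, hg0]
    · rw [if_neg h2, hgj _ (by omega) (by omega)]

omit hM hβ heq in
lemma invtoReal : (((M:ℝ≥0∞) + 1)⁻¹).toReal = 1 / ((M:ℝ) + 1) := by
  have hcast : ((M+1 : ℕ) : ℝ≥0∞) = (M:ℝ≥0∞) + 1 := by push_cast; ring
  rw [ENNReal.toReal_inv, ← hcast, ENNReal.toReal_natCast, one_div]
  push_cast
  ring_nf

lemma cbeta_eval : cbeta β = 1 / ((M : ℝ) + 1) := by
  unfold cbeta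
  obtain ⟨μ0, h1, h2, h3, h4⟩ := cb_mem hM hβ heq
  have hmem : (1:ℝ) / ((M:ℝ)+1) ∈ {r : ℝ | ∃ μ : Measure (ℕ → ℤ), IsProbabilityMeasure μ ∧
      μ (Xbeta β) = 1 ∧ μ.map shiftSeq = μ ∧ r = (μ {u | u 0 = 1}).toReal} :=
    ⟨μ0, h1, h2, h3, h4⟩
  have hub : ∀ r ∈ {r : ℝ | ∃ μ : Measure (ℕ → ℤ), IsProbabilityMeasure μ ∧
      μ (Xbeta β) = 1 ∧ μ.map shiftSeq = μ ∧ r = (μ {u | u 0 = 1}).toReal},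
      r ≤ 1 / ((M:ℝ) + 1) := by
    rintro r ⟨μ, hp, hX, hi, rfl⟩
    have hle := cb_upper hM hβ heq hp hX hi
    have hfin : (((M:ℝ≥0∞) + 1)⁻¹) ≠ ⊤ := by
      simp [ENNReal.inv_ne_top]
    calc (μ {u : ℕ → ℤ | u 0 = 1}).toReal ≤ (((M:ℝ≥0∞) + 1)⁻¹).toReal :=
          ENNReal.toReal_mono hfin hle
    _ = 1 / ((M:ℝ) + 1) := invtoReal (M := M)
  exact le_antisymm (csSup_le ⟨_, hmem⟩ hub) (le_csSup ⟨_, hub⟩ hmem)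

end Parry2
end Aux

/-- **Parry numbers with `β^{M+1} = β^M + 1`.**  If `β > 1` satisfies `β^{M+1} = β^M + 1`,
then the quasi-greedy expansion of `1` is `(1 0^M)^∞` and `c_β = 1/(M+1)`. -/
theorem cbeta_pearl (M : ℕ) (hM : 1 ≤ M) (β : ℝ) (hβ : 1 < β)
    (heq : β ^ (M + 1) = β ^ M + 1) :
    (∀ n : ℕ, qone β n = if n % (M + 1) = 0 then 1 else 0) ∧
      cbeta β = 1 / ((M : ℝ) + 1) := by
  exact ⟨qone_eval hM hβ heq, cbeta_eval hM hβ heq⟩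
end
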